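/- Let w = (w_1, w_2) ∈ ℝ² with w_1 ≥ 0 and w_2 ≤ 0, and set w_r = (w_1,w_2,0) and w_l = (0,w_1,w_2) in ℝ³. Then g(w_l, w_r) ≥ (1/(2π))·(√3/2 − π/6)·‖w‖². -/

import Mathlib

open scoped RealInnerProductSpace
open InnerProductGeometry Real

/-- `g u v = (1/(2π))·‖u‖·‖v‖·(sin θ_{u,v} + (π − θ_{u,v})·cos θ_{u,v})`. -/
noncomputable def g {E : Type*} [NormedAddCommGroup E] [InnerProductSpace ℝ E]
    (u v : E) : ℝ :=
  (1 / (2 * π)) * ‖u‖ * ‖v‖ *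
    (Real.sin (angle u v) + (π - angle u v) * Real.cos (angle u v))

/-- The vector `(a, b) ∈ ℝ²`. -/
noncomputable def e2 (a b : ℝ) : EuclideanSpace ℝ (Fin 2) := WithLp.toLp 2 ![a, b]

/-- The vector `(a, b, c) ∈ ℝ³`. -/
noncomputable def e3 (a b c : ℝ) : EuclideanSpace ℝ (Fin 3) := WithLp.toLp 2 ![a, b, c]

lemma deriv_aux (x : ℝ) :
    HasDerivAt (fun x => Real.sin x + (π - x) * Real.cos x) (-(π - x) * Real.sin x) x := by
  have h1 := Real.hasDerivAt_sin x
  have h2 := (((hasDerivAt_id x).const_sub π).mul (Real.hasDerivAt_cos x))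
  refine (h1.add h2).congr_deriv ?_
  simp only [id]
  ring

lemma key (θ : ℝ) (hθ1 : π / 2 ≤ θ) (hθ2 : θ ≤ 2 * π / 3) :
    Real.sqrt 3 / 2 - π / 6 ≤ Real.sin θ + (π - θ) * Real.cos θ := by
  have hpi := Real.pi_pos
  have hf : AntitoneOn (fun x => Real.sin x + (π - x) * Real.cos x)
      (Set.Icc (π / 2) (2 * π / 3)) := by
    apply antitoneOn_of_deriv_nonpos (convex_Icc _ _)
    · exact Continuous.continuousOn (by continuity)
    · intro x hx
      exact (deriv_aux x).differentiableAt.differentiableWithinAt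
    · intro x hx
      rw [interior_Icc] at hx
      rw [(deriv_aux x).deriv]
      have hs : 0 ≤ Real.sin x :=
        Real.sin_nonneg_of_nonneg_of_le_pi (by nlinarith [hx.1]) (by nlinarith [hx.2])
      nlinarith [hx.2]
  have hmem : θ ∈ Set.Icc (π / 2) (2 * π / 3) := ⟨hθ1, hθ2⟩
  have hend : (2 * π / 3) ∈ Set.Icc (π / 2) (2 * π / 3) := ⟨by nlinarith, le_refl _⟩
  have := hf hmem hend hθ2
  have hsin : Real.sin (2 * π / 3) = Real.sqrt 3 / 2 := by
    have : 2 * π / 3 = π - π / 3 := by ring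
    rw [this, Real.sin_pi_sub, Real.sin_pi_div_three]
  have hcos : Real.cos (2 * π / 3) = -(1 / 2) := by
    have : 2 * π / 3 = π - π / 3 := by ring
    rw [this, Real.cos_pi_sub, Real.cos_pi_div_three]
  simp only [hsin, hcos] at this
  calc Real.sqrt 3 / 2 - π / 6 = Real.sqrt 3 / 2 + (π - 2 * π / 3) * -(1 / 2) := by ring
  _ ≤ _ := this

theorem stmt18 (w1 w2 : ℝ) (h1 : 0 ≤ w1) (h2 : w2 ≤ 0) :
    (1 / (2 * π)) * (Real.sqrt 3 / 2 - π / 6) * ‖e2 w1 w2‖ ^ 2 ≤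
      g (e3 0 w1 w2) (e3 w1 w2 0) := by
  have hpi := Real.pi_pos
  have hN2 : ‖e2 w1 w2‖ ^ 2 = w1 ^ 2 + w2 ^ 2 := by
    rw [e2, EuclideanSpace.norm_eq]
    rw [Real.sq_sqrt (by positivity)]
    simp [Fin.sum_univ_two, sq_abs]
  have hnl : ‖e3 0 w1 w2‖ = ‖e2 w1 w2‖ := by
    rw [e2, e3, EuclideanSpace.norm_eq, EuclideanSpace.norm_eq]
    congr 1
    simp [Fin.sum_univ_three, Fin.sum_univ_two]
  have hnr : ‖e3 w1 w2 0‖ = ‖e2 w1 w2‖ := by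
    rw [e2, e3, EuclideanSpace.norm_eq, EuclideanSpace.norm_eq]
    congr 1
    simp [Fin.sum_univ_three, Fin.sum_univ_two]
  have hinner : (inner ℝ (e3 0 w1 w2) (e3 w1 w2 0) : ℝ) = w1 * w2 := by
    rw [e3, e3]
    simp [PiLp.inner_apply, Fin.sum_univ_three, mul_comm]
  set N := ‖e2 w1 w2‖ with hNdef
  have hNnn : 0 ≤ N := norm_nonneg _
  rw [g, hnl, hnr]
  by_cases hN : N = 0
  · rw [hN]
    simp
  · have hNpos : 0 < N := lt_of_le_of_ne hNnn (Ne.symm hN)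
    set c : ℝ := w1 * w2 / (N * N) with hcdef
    have hangle : angle (e3 0 w1 w2) (e3 w1 w2 0) = Real.arccos c := by
      rw [InnerProductGeometry.angle, hinner, hnl, hnr]
    have hc0 : c ≤ 0 := div_nonpos_of_nonpos_of_nonneg (mul_nonpos_of_nonneg_of_nonpos h1 h2) (by positivity)
    have hc1 : -(1 / 2) ≤ c := by
      rw [hcdef, le_div_iff₀ (by positivity)]
      have : N * N = w1 ^ 2 + w2 ^ 2 := by nlinarith [hN2]
      nlinarith [sq_nonneg (w1 + w2)]
    have hanti : ∀ a b : ℝ, a ≤ b → Real.arccos b ≤ Real.arccos a := by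
      intro a b h
      simp only [Real.arccos]
      have := Real.monotone_arcsin h
      linarith
    have hθ1 : π / 2 ≤ Real.arccos c := by
      have := hanti c 0 hc0
      rwa [Real.arccos_zero] at this
    have hθ2 : Real.arccos c ≤ 2 * π / 3 := by
      have := hanti (-(1 / 2)) c hc1
      have harc : Real.arccos (-(1 / 2)) = 2 * π / 3 := by
        rw [show (-(1/2) : ℝ) = Real.cos (2 * π / 3) by
          rw [show 2 * π / 3 = π - π / 3 by ring, Real.cos_pi_sub, Real.cos_pi_div_three]]
        rw [Real.arccos_cos (by nlinarith) (by nlinarith)]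
      linarith [harc ▸ this]
    rw [hangle]
    have hkey := key _ hθ1 hθ2
    have hfac : 0 ≤ 1 / (2 * π) * N * N := by positivity
    nlinarith [sq_nonneg N, mul_le_mul_of_nonneg_left hkey hfac]
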